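/- Fix integers n ≥ 1, ω ≥ 1 and 1 ≤ k ≤ n. The constant tuple z with z_j = kω for every j ∈ ℤ/nℤ lies in C(k,n,ω), and for every ℓ ∈ C(k,n,ω) there is a finite sequence of moment-graph edges leading from ℓ to z; in particular z is the unique minimal element of C(k,n,ω) with respect to the partial order generated by the moment-graph edges. -/
import Mathlib

/-- The set `C(k,n,ω)` of length tuples: `ℓ : ℤ/nℤ → ℕ` with `ℓ j ≤ ωn`, total sum `kωn`,
such that `j ↦ j + ℓ j (mod n)` is a bijection of `ℤ/nℤ`. -/
def Ctuples (n ω k : ℕ) [NeZero n] : Set (ZMod n → ℕ) :=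
  {ℓ | (∀ j, ℓ j ≤ ω * n) ∧ (∑ j : ZMod n, ℓ j) = k * ω * n ∧
       Function.Bijective fun j : ZMod n => j + (ℓ j : ZMod n)}

/-- The cut-and-paste move `f_{i,j,r}`: replace `ℓ i` by `ℓ i − r` and `ℓ j` by `ℓ j + r`,
keeping all other entries. -/
def cutPaste (n : ℕ) (ℓ : ZMod n → ℕ) (i j : ZMod n) (r : ℕ) : ZMod n → ℕ :=
  fun s => if s = i then ℓ i - r else if s = j then ℓ j + r else ℓ s

/-- The moment-graph edge relation on length tuples: `ℓ → ℓ'` if `ℓ' = f_{i,j,r}(ℓ)` for a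
valid cut-and-paste move with `r ≥ 1` and `ℓ i > ℓ j + r`. -/
def MomentEdge (n ω : ℕ) (ℓ ℓ' : ZMod n → ℕ) : Prop :=
  ∃ (i j : ZMod n) (r : ℕ), i ≠ j ∧ 1 ≤ r ∧ r ≤ ℓ i ∧ ℓ j + r ≤ ω * n ∧
    i + (ℓ i : ZMod n) = j + (ℓ j : ZMod n) + (r : ZMod n) ∧
    ℓ j + r < ℓ i ∧ ℓ' = cutPaste n ℓ i j r

section Aux

variable {n : ℕ} [NeZero n]

/-- The affine lift `w(a) = a + ℓ(a mod n)` of a length tuple. -/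
private def wlift (ℓ : ZMod n → ℕ) : ℤ → ℤ := fun a => a + (ℓ (a : ZMod n) : ℤ)

private lemma wlift_inj (ℓ : ZMod n → ℕ)
    (hb : Function.Bijective fun j : ZMod n => j + (ℓ j : ZMod n)) :
    Function.Injective (wlift ℓ) := by
  intro a b h
  have h2 : ((a : ZMod n) + ((ℓ (a : ZMod n) : ℕ) : ZMod n))
      = ((b : ZMod n) + ((ℓ (b : ZMod n) : ℕ) : ZMod n)) := by
    have := congrArg (fun t : ℤ => (t : ZMod n)) h
    simpa [wlift] using this
  have h3 : ((a : ℤ) : ZMod n) = ((b : ℤ) : ZMod n) := hb.1 h2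
  have h4 : ℓ (a : ZMod n) = ℓ (b : ZMod n) := by rw [h3]
  simp only [wlift, h4] at h
  omega

private lemma wlift_surj (ℓ : ZMod n → ℕ)
    (hb : Function.Bijective fun j : ZMod n => j + (ℓ j : ZMod n)) :
    Function.Surjective (wlift ℓ) := by
  intro c
  obtain ⟨j, hj⟩ := hb.2 ((c : ZMod n))
  refine ⟨c - (ℓ j : ℤ), ?_⟩
  have ha : ((c - (ℓ j : ℤ) : ℤ) : ZMod n) = j := by
    push_cast
    simp only at hj
    rw [← hj]; ring
  simp only [wlift, ha]
  ring

private lemma constant_of_mono (ℓ : ZMod n → ℕ)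
    (hb : Function.Bijective fun j : ZMod n => j + (ℓ j : ZMod n))
    (hmono : ∀ a b : ℤ, a < b → wlift ℓ a < wlift ℓ b) :
    ∀ x : ZMod n, ℓ x = ℓ 0 := by
  -- step: w(a+1) = w(a)+1
  have step : ∀ a : ℤ, wlift ℓ (a + 1) = wlift ℓ a + 1 := by
    intro a
    obtain ⟨c, hc⟩ := wlift_surj ℓ hb (wlift ℓ a + 1)
    rcases lt_trichotomy c (a + 1) with h | h | h
    · have hle : wlift ℓ c ≤ wlift ℓ a := by
        rcases lt_or_eq_of_le (Int.lt_add_one_iff.mp h) with h' | h'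
        · exact (hmono c a h').le
        · rw [h']
      omega
    · rw [← h, hc]
    · have h1 := hmono a (a + 1) (by omega)
      have h2 := hmono (a + 1) c h
      omega
  -- hence ℓ (x+1) = ℓ x for cast values
  have step' : ∀ a : ℤ, ℓ ((a : ZMod n) + 1) = ℓ (a : ZMod n) := by
    intro a
    have := step a
    simp only [wlift] at this
    have hcast : ((a + 1 : ℤ) : ZMod n) = (a : ZMod n) + 1 := by push_cast; ring
    rw [hcast] at this
    omega
  have key : ∀ m : ℕ, ℓ ((m : ℤ) : ZMod n) = ℓ 0 := by
    intro m
    induction m with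
    | zero => norm_num
    | succ m ih =>
      have hc : (((m : ℤ) + 1 : ℤ) : ZMod n) = ((m : ℤ) : ZMod n) + 1 := by push_cast; ring
      calc ℓ (((m + 1 : ℕ) : ℤ) : ZMod n) = ℓ (((m : ℤ) : ZMod n) + 1) := by
            rw [← hc]; norm_num
        _ = ℓ ((m : ℤ) : ZMod n) := step' m
        _ = ℓ 0 := ih
  intro x
  have : ((x.val : ℤ) : ZMod n) = x := by
    push_cast
    exact ZMod.natCast_rightInverse x
  calc ℓ x = ℓ ((x.val : ℤ) : ZMod n) := by rw [this]
    _ = ℓ 0 := key x.val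

private lemma exists_edge {ω k : ℕ} (ℓ : ZMod n → ℕ) (hℓ : ℓ ∈ Ctuples n ω k)
    (hnc : ∃ x, ℓ x ≠ ℓ 0) :
    ∃ ℓ', MomentEdge n ω ℓ ℓ' ∧ ℓ' ∈ Ctuples n ω k ∧
      (∑ j : ZMod n, ℓ' j * ℓ' j) < ∑ j : ZMod n, ℓ j * ℓ j := by
  obtain ⟨hbound, hsum, hb⟩ := hℓ
  -- existence of an inversion
  have hinv : ∃ a b : ℤ, a < b ∧ wlift ℓ b < wlift ℓ a := by
    by_contra hcon
    push_neg at hcon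
    obtain ⟨x, hx⟩ := hnc
    refine hx (constant_of_mono ℓ hb ?_ x)
    intro a b hab
    rcases lt_or_eq_of_le (hcon a b hab) with h | h
    · exact h
    · exact absurd (wlift_inj ℓ hb h.symm) (by omega)
  obtain ⟨a, b, hab, hwab⟩ := hinv
  set i : ZMod n := (a : ZMod n) with hi
  set j : ZMod n := (b : ZMod n) with hj
  set r : ℕ := (wlift ℓ a - wlift ℓ b).toNat with hrdef
  have hr : (r : ℤ) = wlift ℓ a - wlift ℓ b := Int.toNat_of_nonneg (by omega)
  have hwa : wlift ℓ a = a + (ℓ i : ℤ) := rfl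
  have hwb : wlift ℓ b = b + (ℓ j : ℤ) := rfl
  have hij : i ≠ j := by
    intro h
    have : ℓ i = ℓ j := by rw [h]
    omega
  have hr1 : 1 ≤ r := by omega
  have hlt : ℓ j + r < ℓ i := by
    have : (ℓ j : ℤ) + r < (ℓ i : ℤ) := by omega
    exact_mod_cast this
  have hrle : r ≤ ℓ i := by omega
  have hbnd : ℓ j + r ≤ ω * n := by
    have h1 : ℓ i ≤ ω * n := hbound i
    have : (ℓ j : ℤ) + r ≤ (ω * n : ℕ) := by push_cast; omega
    exact_mod_cast this
  have hcong : i + (ℓ i : ZMod n) = j + (ℓ j : ZMod n) + (r : ZMod n) := by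
    have hz : (wlift ℓ a : ℤ) = wlift ℓ b + (r : ℤ) := by omega
    rw [hwa, hwb] at hz
    have := congrArg (fun t : ℤ => (t : ZMod n)) hz
    simpa [hi, hj] using this
  have hcpi : cutPaste n ℓ i j r i = ℓ i - r := by simp [cutPaste]
  have hcpj : cutPaste n ℓ i j r j = ℓ j + r := by simp [cutPaste, hij.symm]
  have hcpo : ∀ s, s ≠ i → s ≠ j → cutPaste n ℓ i j r s = ℓ s := by
    intro s h1 h2; simp [cutPaste, h1, h2]
  refine ⟨cutPaste n ℓ i j r, ⟨i, j, r, hij, hr1, hrle, hbnd, hcong, hlt, rfl⟩, ?_, ?_⟩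
  · -- membership in Ctuples
    refine ⟨?_, ?_, ?_⟩
    · intro s
      by_cases h1 : s = i
      · rw [h1, hcpi]; exact le_trans (Nat.sub_le _ _) (hbound i)
      · by_cases h2 : s = j
        · rw [h2, hcpj]; exact hbnd
        · rw [hcpo s h1 h2]; exact hbound s
    · -- sum preserved
      have hjmem : j ∈ Finset.univ.erase i := Finset.mem_erase.mpr ⟨hij.symm, Finset.mem_univ j⟩
      have split : ∀ G : ZMod n → ℕ, (∑ s : ZMod n, G s)
          = G i + (G j + ∑ s ∈ (Finset.univ.erase i).erase j, G s) := by
        intro G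
        rw [Finset.add_sum_erase _ G hjmem, Finset.add_sum_erase _ G (Finset.mem_univ i)]
      have hrest : (∑ s ∈ (Finset.univ.erase i).erase j, cutPaste n ℓ i j r s)
          = ∑ s ∈ (Finset.univ.erase i).erase j, ℓ s := by
        refine Finset.sum_congr rfl fun s hs => ?_
        simp only [Finset.mem_erase] at hs
        rw [hcpo s hs.2.1 hs.1]
      rw [split (cutPaste n ℓ i j r), hrest, hcpi, hcpj]
      rw [split ℓ] at hsum
      omega
    · -- bijectivity
      have hfun : (fun s : ZMod n => s + ((cutPaste n ℓ i j r s : ℕ) : ZMod n))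
          = (Equiv.swap (i + (ℓ i : ZMod n)) (j + (ℓ j : ZMod n)))
            ∘ (fun s : ZMod n => s + (ℓ s : ZMod n)) := by
        funext s
        by_cases hsi : s = i
        · subst hsi
          simp only [Function.comp_apply, Equiv.swap_apply_left]
          rw [hcpi, Nat.cast_sub hrle]
          have : (i + (ℓ i : ZMod n)) - (r : ZMod n) = j + (ℓ j : ZMod n) := by
            rw [hcong]; ring
          rw [← this]; ring
        · by_cases hsj : s = j
          · subst hsj
            simp only [Function.comp_apply, Equiv.swap_apply_right]
            rw [hcpj, hcong]; push_cast; ring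
          · simp only [Function.comp_apply]
            rw [hcpo s hsi hsj]
            rw [Equiv.swap_apply_of_ne_of_ne]
            · intro h
              exact hsi (hb.1 h)
            · intro h
              exact hsj (hb.1 h)
      rw [hfun]
      exact (Equiv.swap _ _).bijective.comp hb
  · -- measure decreases
    have hjmem : j ∈ Finset.univ.erase i := Finset.mem_erase.mpr ⟨hij.symm, Finset.mem_univ j⟩
    have split : ∀ G : ZMod n → ℕ, (∑ s : ZMod n, G s)
        = G i + (G j + ∑ s ∈ (Finset.univ.erase i).erase j, G s) := by
      intro G
      rw [Finset.add_sum_erase _ G hjmem, Finset.add_sum_erase _ G (Finset.mem_univ i)]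
    have hrest : (∑ s ∈ (Finset.univ.erase i).erase j,
          cutPaste n ℓ i j r s * cutPaste n ℓ i j r s)
        = ∑ s ∈ (Finset.univ.erase i).erase j, ℓ s * ℓ s := by
      refine Finset.sum_congr rfl fun s hs => ?_
      simp only [Finset.mem_erase] at hs
      rw [hcpo s hs.2.1 hs.1]
    rw [split (fun s => cutPaste n ℓ i j r s * cutPaste n ℓ i j r s),
      split (fun s => ℓ s * ℓ s), hrest]
    simp only [hcpi, hcpj]
    have key : (ℓ i - r) * (ℓ i - r) + (ℓ j + r) * (ℓ j + r) < ℓ i * ℓ i + ℓ j * ℓ j := by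
      set A := ℓ i - r with hA
      have hAi : ℓ i = A + r := by omega
      have hBA : ℓ j < A := by omega
      rw [hAi]
      nlinarith [Nat.mul_lt_mul_of_lt_of_le hBA (le_refl r) (by omega : 0 < r)]
    omega

end Aux

/-- The constant tuple `z ≡ kω` lies in `C(k,n,ω)`, every `ℓ ∈ C(k,n,ω)`
admits a finite sequence of moment-graph edges leading to `z`, and `z` is the unique
minimal element of `C(k,n,ω)` for the order generated by the moment-graph edges. -/
theorem constant_tuple_is_unique_minimal
    (n ω k : ℕ) [NeZero n] (hω : 1 ≤ ω) (hk : 1 ≤ k) (hkn : k ≤ n)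
    (z : ZMod n → ℕ) (hz : ∀ j, z j = k * ω) :
    z ∈ Ctuples n ω k ∧
    (∀ ℓ ∈ Ctuples n ω k, Relation.ReflTransGen (MomentEdge n ω) ℓ z) ∧
    (∀ z' ∈ Ctuples n ω k,
      (∀ ℓ ∈ Ctuples n ω k, Relation.ReflTransGen (MomentEdge n ω) z' ℓ → ℓ = z') →
      z' = z) := by
  have hzC : z ∈ Ctuples n ω k := by
    refine ⟨?_, ?_, ?_⟩
    · intro j
      rw [hz j]
      calc k * ω ≤ n * ω := Nat.mul_le_mul_right ω hkn
        _ = ω * n := Nat.mul_comm n ω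
    · have : (∑ j : ZMod n, z j) = ∑ _j : ZMod n, k * ω :=
        Finset.sum_congr rfl fun j _ => hz j
      rw [this, Finset.sum_const, Finset.card_univ, ZMod.card, smul_eq_mul]
      ring
    · have heq : (fun j : ZMod n => j + ((z j : ℕ) : ZMod n))
          = fun j : ZMod n => j + ((k * ω : ℕ) : ZMod n) := by
        funext j; rw [hz j]
      rw [heq]
      exact (Equiv.addRight ((k * ω : ℕ) : ZMod n)).bijective
  have hreach : ∀ ℓ ∈ Ctuples n ω k, Relation.ReflTransGen (MomentEdge n ω) ℓ z := by
    suffices H : ∀ M : ℕ, ∀ ℓ ∈ Ctuples n ω k, (∑ j : ZMod n, ℓ j * ℓ j) = M →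
        Relation.ReflTransGen (MomentEdge n ω) ℓ z by
      intro ℓ hℓ
      exact H _ ℓ hℓ rfl
    intro M
    induction M using Nat.strong_induction_on with
    | _ M ih =>
      intro ℓ hℓ hM
      by_cases hc : ∀ x, ℓ x = ℓ 0
      · -- constant, hence equal to z
        have hsum := hℓ.2.1
        have hconst : (∑ j : ZMod n, ℓ j) = n * ℓ 0 := by
          rw [Finset.sum_congr rfl fun j _ => hc j, Finset.sum_const, Finset.card_univ,
            ZMod.card, smul_eq_mul]
        have hval : ℓ 0 = k * ω := by
          have h1 : n * ℓ 0 = n * (k * ω) := by rw [← hconst, hsum]; ring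
          exact Nat.eq_of_mul_eq_mul_left (NeZero.pos n) h1
        have : ℓ = z := by
          funext x
          rw [hc x, hval, hz x]
        rw [this]
      · push_neg at hc
        obtain ⟨ℓ', he, hℓ', hlt⟩ := exists_edge ℓ hℓ hc
        exact Relation.ReflTransGen.head he (ih _ (hM ▸ hlt) ℓ' hℓ' rfl)
  refine ⟨hzC, hreach, ?_⟩
  intro z' hz' hmin
  exact (hmin z hzC (hreach z' hz')).symm
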